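/- For every h ≥ 0, there exists a picture in DC₁ whose matching graph contains a simple circuit of length 4 + 8h. -/

import Mathlib

/-- The alphabet Δ₁ = {a, b, c, d}. -/
inductive Del : Type
  | a | b | c | d
deriving DecidableEq

/-- Row cancellation: pairs [a,b] and [c,d]. -/
def rowStep (w w' : List Del) : Prop :=
  ∃ (u v : List Del),
    (w = u ++ [Del.a, Del.b] ++ v ∨ w = u ++ [Del.c, Del.d] ++ v) ∧ w' = u ++ v

/-- The row Dyck language D^Row. -/
def DRow (w : List Del) : Prop := Relation.ReflTransGen rowStep w []

/-- Column cancellation: pairs [a,c] and [b,d]. -/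
def colStep (w w' : List Del) : Prop :=
  ∃ (u v : List Del),
    (w = u ++ [Del.a, Del.c] ++ v ∨ w = u ++ [Del.b, Del.d] ++ v) ∧ w' = u ++ v

/-- The column Dyck language D^Col. -/
def DCol (w : List Del) : Prop := Relation.ReflTransGen colStep w []

/-- Row i (of length n) of a picture. -/
def row (p : ℕ → ℕ → Del) (n i : ℕ) : List Del := (List.range n).map (p i)

/-- Column j (of length m) of a picture. -/
def col (p : ℕ → ℕ → Del) (m j : ℕ) : List Del :=
  (List.range m).map (fun i => p i j)

/-- The Dyck crossword language DC₁: nonempty pictures all of whose rows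
are in D^Row and all of whose columns are in D^Col. -/
def DC (m n : ℕ) (p : ℕ → ℕ → Del) : Prop :=
  1 ≤ m ∧ 1 ≤ n ∧ (∀ i < m, DRow (row p n i)) ∧ (∀ j < n, DCol (col p m j))

/-- Positions `j < j'` match in a row word: the letters form a row matching
pair ([a,b] or [c,d]) and the factor strictly between them is in D^Row. -/
def rowMatchW (w : List Del) (j j' : ℕ) : Prop :=
  j < j' ∧ j' < w.length ∧
    ((w[j]? = some Del.a ∧ w[j']? = some Del.b) ∨
      (w[j]? = some Del.c ∧ w[j']? = some Del.d)) ∧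
    DRow ((w.drop (j + 1)).take (j' - (j + 1)))

/-- Positions `i < i'` match in a column word: the letters form a column
matching pair ([a,c] or [b,d]) and the factor strictly between them is in
D^Col. -/
def colMatchW (w : List Del) (i i' : ℕ) : Prop :=
  i < i' ∧ i' < w.length ∧
    ((w[i]? = some Del.a ∧ w[i']? = some Del.c) ∨
      (w[i]? = some Del.b ∧ w[i']? = some Del.d)) ∧
    DCol ((w.drop (i + 1)).take (i' - (i + 1)))

/-- Row edge of the matching graph of picture `p` (of size m×n) between cells
`u` and `v`: same row, matched positions (in either order). -/
def rowEdge (p : ℕ → ℕ → Del) (n : ℕ) (u v : ℕ × ℕ) : Prop :=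
  u.1 = v.1 ∧ (rowMatchW (row p n u.1) u.2 v.2 ∨ rowMatchW (row p n u.1) v.2 u.2)

/-- Column edge of the matching graph between cells `u` and `v`. -/
def colEdge (p : ℕ → ℕ → Del) (m : ℕ) (u v : ℕ × ℕ) : Prop :=
  u.2 = v.2 ∧ (colMatchW (col p m u.2) u.1 v.1 ∨ colMatchW (col p m u.2) v.1 u.1)

/-- Adjacency in the matching graph. -/
def adj (p : ℕ → ℕ → Del) (m n : ℕ) (u v : ℕ × ℕ) : Prop :=
  rowEdge p n u v ∨ colEdge p m u v

open Del

-- basic closure lemmas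
lemma rowStep_mono (x y : List Del) {w w' : List Del} (h : rowStep w w') :
    rowStep (x ++ w ++ y) (x ++ w' ++ y) := by
  obtain ⟨u, v, h1, rfl⟩ := h
  refine ⟨x ++ u, v ++ y, ?_, by simp⟩
  rcases h1 with h1 | h1 <;> [left; right] <;> subst h1 <;> simp

lemma DRow.nil : DRow [] := Relation.ReflTransGen.refl

lemma DRow.mono {w : List Del} (x y : List Del) (h : DRow w) :
    Relation.ReflTransGen rowStep (x ++ w ++ y) (x ++ y) := by
  have := Relation.ReflTransGen.lift (fun z => x ++ z ++ y)
    (fun a b hab => rowStep_mono x y hab) _ _ h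
  simpa [Function.onFun] using this

lemma DRow.append {w v : List Del} (hw : DRow w) (hv : DRow v) : DRow (w ++ v) := by
  have h1 := hw.mono [] v
  simp at h1
  exact h1.trans hv

lemma DRow.wrap_ab {w : List Del} (hw : DRow w) : DRow (a :: w ++ [b]) := by
  have h1 := hw.mono [a] [b]
  refine Relation.ReflTransGen.trans (by simpa using h1) ?_
  exact Relation.ReflTransGen.single ⟨[], [], Or.inl rfl, rfl⟩

lemma DRow.wrap_cd {w : List Del} (hw : DRow w) : DRow (c :: w ++ [d]) := by
  have h1 := hw.mono [c] [d]
  refine Relation.ReflTransGen.trans (by simpa using h1) ?_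
  exact Relation.ReflTransGen.single ⟨[], [], Or.inr rfl, rfl⟩

lemma colStep_mono (x y : List Del) {w w' : List Del} (h : colStep w w') :
    colStep (x ++ w ++ y) (x ++ w' ++ y) := by
  obtain ⟨u, v, h1, rfl⟩ := h
  refine ⟨x ++ u, v ++ y, ?_, by simp⟩
  rcases h1 with h1 | h1 <;> [left; right] <;> subst h1 <;> simp

lemma DCol.nil : DCol [] := Relation.ReflTransGen.refl

lemma DCol.mono {w : List Del} (x y : List Del) (h : DCol w) :
    Relation.ReflTransGen colStep (x ++ w ++ y) (x ++ y) := by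
  have := Relation.ReflTransGen.lift (fun z => x ++ z ++ y)
    (fun a b hab => colStep_mono x y hab) _ _ h
  simpa [Function.onFun] using this

lemma DCol.append {w v : List Del} (hw : DCol w) (hv : DCol v) : DCol (w ++ v) := by
  have h1 := hw.mono [] v
  simp at h1
  exact h1.trans hv

lemma DCol.wrap_ac {w : List Del} (hw : DCol w) : DCol (a :: w ++ [c]) := by
  have h1 := hw.mono [a] [c]
  refine Relation.ReflTransGen.trans (by simpa using h1) ?_
  exact Relation.ReflTransGen.single ⟨[], [], Or.inl rfl, rfl⟩

lemma DCol.wrap_bd {w : List Del} (hw : DCol w) : DCol (b :: w ++ [d]) := by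
  have h1 := hw.mono [b] [d]
  refine Relation.ReflTransGen.trans (by simpa using h1) ?_
  exact Relation.ReflTransGen.single ⟨[], [], Or.inr rfl, rfl⟩

lemma DRow.ab : DRow [a, b] := by simpa using DRow.nil.wrap_ab
lemma DRow.cd : DRow [c, d] := by simpa using DRow.nil.wrap_cd
lemma DCol.ac : DCol [a, c] := by simpa using DCol.nil.wrap_ac
lemma DCol.bd : DCol [b, d] := by simpa using DCol.nil.wrap_bd

def rep (w : List Del) : ℕ → List Del
  | 0 => []
  | k+1 => w ++ rep w k

lemma rep_length (w : List Del) (k : ℕ) : (rep w k).length = k * w.length := by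
  induction k with
  | zero => simp [rep]
  | succ n ih => simp [rep, ih, Nat.succ_mul]; omega

lemma rep_add (w : List Del) (k l : ℕ) : rep w (k + l) = rep w k ++ rep w l := by
  induction k with
  | zero => simp [rep]
  | succ n ih => rw [Nat.succ_add]; simp [rep, ih]

lemma DRow.rep {w : List Del} (hw : DRow w) (k : ℕ) : DRow (rep w k) := by
  induction k with
  | zero => exact DRow.nil
  | succ n ih => exact hw.append ih

lemma DCol.rep {w : List Del} (hw : DCol w) (k : ℕ) : DCol (rep w k) := by
  induction k with
  | zero => exact DCol.nil
  | succ n ih => exact hw.append ih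

-- generic rowMatchW construction
lemma rowMatchW_split (x y : Del) (u mid v : List Del)
    (hxy : (x = a ∧ y = b) ∨ (x = c ∧ y = d)) (hmid : DRow mid) :
    rowMatchW (u ++ x :: (mid ++ y :: v)) u.length (u.length + (mid.length + 1)) := by
  refine ⟨by omega, by simp only [List.length_append, List.length_cons]; omega, ?_, ?_⟩
  · have h1 : (u ++ x :: (mid ++ y :: v))[u.length]? = some x := by
      rw [List.getElem?_append_right (le_refl _)]
      simp
    have h2 : (u ++ x :: (mid ++ y :: v))[u.length + (mid.length + 1)]? = some y := by
      rw [List.getElem?_append_right (by omega)]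
      have : u.length + (mid.length + 1) - u.length = mid.length + 1 := by omega
      rw [this]
      show (x :: (mid ++ y :: v))[mid.length + 1]? = some y
      simp only [List.getElem?_cons_succ]
      rw [List.getElem?_append_right (le_refl _)]
      simp
    rcases hxy with ⟨hx, hy⟩ | ⟨hx, hy⟩
    · exact Or.inl ⟨by rw [h1, hx], by rw [h2, hy]⟩
    · exact Or.inr ⟨by rw [h1, hx], by rw [h2, hy]⟩
  · have hd : (u ++ x :: (mid ++ y :: v)).drop (u.length + 1) = mid ++ y :: v := by
      have : u ++ x :: (mid ++ y :: v) = (u ++ [x]) ++ (mid ++ y :: v) := by simp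
      rw [this]
      have hl : u.length + 1 = (u ++ [x]).length := by simp
      rw [hl, List.drop_left]
    have harith : u.length + (mid.length + 1) - (u.length + 1) = mid.length := by omega
    rw [hd, harith, List.take_left]
    exact hmid

lemma colMatchW_03 (x0 x1 x2 x3 : Del)
    (hxy : (x0 = a ∧ x3 = c) ∨ (x0 = b ∧ x3 = d)) (hmid : DCol [x1, x2]) :
    colMatchW [x0, x1, x2, x3] 0 3 := by
  refine ⟨by omega, by simp, ?_, ?_⟩
  · rcases hxy with ⟨hx, hy⟩ | ⟨hx, hy⟩
    · exact Or.inl ⟨by simp [hx], by simp [hy]⟩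
    · exact Or.inr ⟨by simp [hx], by simp [hy]⟩
  · simpa using hmid

lemma colMatchW_01 (x0 x1 x2 x3 : Del)
    (hxy : (x0 = a ∧ x1 = c) ∨ (x0 = b ∧ x1 = d)) :
    colMatchW [x0, x1, x2, x3] 0 1 := by
  refine ⟨by omega, by simp, ?_, by simpa using DCol.nil⟩
  rcases hxy with ⟨hx, hy⟩ | ⟨hx, hy⟩
  · exact Or.inl ⟨by simp [hx], by simp [hy]⟩
  · exact Or.inr ⟨by simp [hx], by simp [hy]⟩

lemma colMatchW_23 (x0 x1 x2 x3 : Del)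
    (hxy : (x2 = a ∧ x3 = c) ∨ (x2 = b ∧ x3 = d)) :
    colMatchW [x0, x1, x2, x3] 2 3 := by
  refine ⟨by omega, by simp, ?_, by simpa using DCol.nil⟩
  rcases hxy with ⟨hx, hy⟩ | ⟨hx, hy⟩
  · exact Or.inl ⟨by simp [hx], by simp [hy]⟩
  · exact Or.inr ⟨by simp [hx], by simp [hy]⟩

-- small DCol facts
lemma DCol.head' {w w' : List Del} (h : colStep w w') (h2 : DCol w') : DCol w :=
  Relation.ReflTransGen.head h h2

lemma DCol.acac : DCol [a, c, a, c] := DCol.ac.append DCol.ac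
lemma DCol.bdbd : DCol [b, d, b, d] := DCol.bd.append DCol.bd
lemma DCol.bacd : DCol [b, a, c, d] := by simpa using DCol.ac.wrap_bd
lemma DCol.abdc : DCol [a, b, d, c] := by simpa using DCol.bd.wrap_ac
lemma DCol.acbd : DCol [a, c, b, d] := DCol.ac.append DCol.bd
lemma DCol.bdac : DCol [b, d, a, c] := DCol.bd.append DCol.ac

-- the picture family
def R0 (g : ℕ) : List Del := [a, b] ++ rep [a, a, b, b] g ++ [a, b]
def R1 (g : ℕ) : List Del := [c] ++ rep [a, b, c, d] g ++ [a, b, d]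
def R2 (g : ℕ) : List Del := rep [a, c, d, b] (g + 1)
def R3 (g : ℕ) : List Del := rep [c, d] (2 * g + 2)

lemma R0_length (g : ℕ) : (R0 g).length = 4 * g + 4 := by simp [R0, rep_length]; omega
lemma R1_length (g : ℕ) : (R1 g).length = 4 * g + 4 := by simp [R1, rep_length]; omega
lemma R2_length (g : ℕ) : (R2 g).length = 4 * g + 4 := by simp [R2, rep_length]; omega
lemma R3_length (g : ℕ) : (R3 g).length = 4 * g + 4 := by simp [R3, rep_length]; omega

def pic (g : ℕ) : ℕ → ℕ → Del := fun i j => (([R0 g, R1 g, R2 g, R3 g]).getD i []).getD j a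

lemma map_range_getD (L : List Del) : (List.range L.length).map (fun j => L.getD j a) = L := by
  apply List.ext_getElem
  · simp
  · intro k h1 h2
    simp only [List.getElem_map, List.getElem_range]
    rw [List.getD_eq_getElem L a h2]

lemma row_pic (g : ℕ) (i : ℕ) (hi : i < 4) :
    row (pic g) (4 * g + 4) i = ([R0 g, R1 g, R2 g, R3 g]).getD i [] := by
  have hlen : (([R0 g, R1 g, R2 g, R3 g]).getD i []).length = 4 * g + 4 := by
    interval_cases i <;> simp [R0_length, R1_length, R2_length, R3_length]
  rw [row, ← hlen]
  exact map_range_getD _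

lemma row_pic0 (g : ℕ) : row (pic g) (4 * g + 4) 0 = R0 g := row_pic g 0 (by omega)
lemma row_pic1 (g : ℕ) : row (pic g) (4 * g + 4) 1 = R1 g := row_pic g 1 (by omega)
lemma row_pic2 (g : ℕ) : row (pic g) (4 * g + 4) 2 = R2 g := row_pic g 2 (by omega)
lemma row_pic3 (g : ℕ) : row (pic g) (4 * g + 4) 3 = R3 g := row_pic g 3 (by omega)

lemma col_pic (g : ℕ) (j : ℕ) :
    col (pic g) 4 j = [(R0 g).getD j a, (R1 g).getD j a, (R2 g).getD j a, (R3 g).getD j a] := by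
  show (List.range 4).map _ = _
  have : List.range 4 = [0, 1, 2, 3] := by decide
  rw [this]
  simp [pic]

-- getD splitting helpers
lemma getD_split (u v : List Del) (k : ℕ) :
    (u ++ v).getD (u.length + k) a = v.getD k a := by
  induction u with
  | nil => simp
  | cons x u ih =>
    have h1 : (x :: u).length + k = (u.length + k) + 1 := by simp; omega
    rw [h1]
    show (x :: (u ++ v)).getD ((u.length + k) + 1) a = _
    rw [List.getD_cons_succ]
    exact ih

lemma getD_split' (u v : List Del) (k n : ℕ) (h : u.length = n) :
    (u ++ v).getD (n + k) a = v.getD k a := by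
  subst h; exact getD_split u v k

-- letter lemmas
lemma R0_getD_first (g r : ℕ) (hr : r < 2) : (R0 g).getD r a = [a, b].getD r a := by
  rw [R0, show [a,b] ++ rep [a,a,b,b] g ++ [a,b] = [a,b] ++ (rep [a,a,b,b] g ++ [a,b]) by simp]
  interval_cases r <;> rfl

lemma R0_getD_block (g t r : ℕ) (ht : t < g) (hr : r < 4) :
    (R0 g).getD (4*t+2+r) a = [a, a, b, b].getD r a := by
  obtain ⟨s, hs⟩ : ∃ s, g = t + (s + 1) := ⟨g - t - 1, by omega⟩
  rw [R0, hs, rep_add]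
  have he : [a,b] ++ (rep [a,a,b,b] t ++ rep [a,a,b,b] (s+1)) ++ [a,b]
      = ([a,b] ++ rep [a,a,b,b] t) ++ ([a,a,b,b] ++ (rep [a,a,b,b] s ++ [a,b])) := by
    show _ = _ ++ ([a,a,b,b] ++ rep [a,a,b,b] s ++ [a,b])
    rw [show [a,a,b,b] ++ rep [a,a,b,b] s = rep [a,a,b,b] (s+1) from rfl]
    simp
  rw [he, getD_split' _ _ r (4*t+2) (by simp [rep_length]; omega)]
  interval_cases r <;> rfl

lemma R0_getD_last (g r : ℕ) (hr : r < 2) : (R0 g).getD (4*g+2+r) a = [a, b].getD r a := by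
  rw [R0, show [a,b] ++ rep [a,a,b,b] g ++ [a,b] = ([a,b] ++ rep [a,a,b,b] g) ++ [a,b] by simp]
  rw [getD_split' _ _ r (4*g+2) (by simp [rep_length]; omega)]

lemma R1_getD_zero (g : ℕ) : (R1 g).getD 0 a = c := rfl

lemma R1_getD_block (g t r : ℕ) (ht : t < g) (hr : r < 4) :
    (R1 g).getD (4*t+1+r) a = [a, b, c, d].getD r a := by
  obtain ⟨s, hs⟩ : ∃ s, g = t + (s + 1) := ⟨g - t - 1, by omega⟩
  rw [R1, hs, rep_add]
  have he : [c] ++ (rep [a,b,c,d] t ++ rep [a,b,c,d] (s+1)) ++ [a,b,d]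
      = ([c] ++ rep [a,b,c,d] t) ++ ([a,b,c,d] ++ (rep [a,b,c,d] s ++ [a,b,d])) := by
    show _ = _ ++ ([a,b,c,d] ++ rep [a,b,c,d] s ++ [a,b,d])
    rw [show [a,b,c,d] ++ rep [a,b,c,d] s = rep [a,b,c,d] (s+1) from rfl]
    simp
  rw [he, getD_split' _ _ r (4*t+1) (by simp [rep_length]; omega)]
  interval_cases r <;> rfl

lemma R1_getD_last (g r : ℕ) (hr : r < 3) : (R1 g).getD (4*g+1+r) a = [a, b, d].getD r a := by
  rw [R1, show [c] ++ rep [a,b,c,d] g ++ [a,b,d] = ([c] ++ rep [a,b,c,d] g) ++ [a,b,d] by simp]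
  rw [getD_split' _ _ r (4*g+1) (by simp [rep_length]; omega)]

lemma R2_getD (g t r : ℕ) (ht : t ≤ g) (hr : r < 4) :
    (R2 g).getD (4*t+r) a = [a, c, d, b].getD r a := by
  obtain ⟨s, hs⟩ : ∃ s, g + 1 = t + (s + 1) := ⟨g - t, by omega⟩
  rw [R2, hs, rep_add]
  rw [getD_split' _ _ r (4*t) (by simp [rep_length]; omega)]
  show ([a,c,d,b] ++ rep [a,c,d,b] s).getD r a = _
  interval_cases r <;> rfl

lemma R3_getD (g u r : ℕ) (hu : u ≤ 2*g+1) (hr : r < 2) :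
    (R3 g).getD (2*u+r) a = [c, d].getD r a := by
  obtain ⟨s, hs⟩ : ∃ s, 2*g + 2 = u + (s + 1) := ⟨2*g+1 - u, by omega⟩
  rw [R3, hs, rep_add]
  rw [getD_split' _ _ r (2*u) (by simp [rep_length]; omega)]
  show ([c,d] ++ rep [c,d] s).getD r a = _
  interval_cases r <;> rfl

-- column identification
lemma col_0 (g : ℕ) : col (pic g) 4 0 = [a, c, a, c] := by
  rw [col_pic]
  rw [show (0:ℕ) = 4*0+0 by ring] at *
  rw [R2_getD g 0 0 (by omega) (by omega), show (4*0+0:ℕ) = 2*0+0 by ring,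
      R3_getD g 0 0 (by omega) (by omega)]
  rw [show (2*0+0:ℕ) = 0 by ring]
  rw [show (R0 g).getD 0 a = [a,b].getD 0 a from R0_getD_first g 0 (by omega), R1_getD_zero]
  rfl

lemma col_4t (g t : ℕ) (h1 : 1 ≤ t) (h2 : t ≤ g) : col (pic g) 4 (4*t) = [b, d, a, c] := by
  rw [col_pic]
  rw [show (R0 g).getD (4*t) a = b by
        rw [show 4*t = 4*(t-1)+2+2 by omega, R0_getD_block g (t-1) 2 (by omega) (by omega)]; rfl]
  rw [show (R1 g).getD (4*t) a = d by
        rw [show 4*t = 4*(t-1)+1+3 by omega, R1_getD_block g (t-1) 3 (by omega) (by omega)]; rfl]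
  rw [show (R2 g).getD (4*t) a = a by
        rw [show 4*t = 4*t+0 by ring, R2_getD g t 0 h2 (by omega)]; rfl]
  rw [show (R3 g).getD (4*t) a = c by
        rw [show 4*t = 2*(2*t)+0 by ring, R3_getD g (2*t) 0 (by omega) (by omega)]; rfl]

lemma col_4t1 (g t : ℕ) (h : t ≤ g) : col (pic g) 4 (4*t+1) = [b, a, c, d] := by
  rw [col_pic]
  rw [show (R0 g).getD (4*t+1) a = b by
        rcases Nat.eq_zero_or_pos t with h0 | h0
        · subst h0; rw [show 4*0+1 = 1 by ring, R0_getD_first g 1 (by omega)]; rfl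
        · rw [show 4*t+1 = 4*(t-1)+2+3 by omega, R0_getD_block g (t-1) 3 (by omega) (by omega)]; rfl]
  rw [show (R1 g).getD (4*t+1) a = a by
        rcases Nat.lt_or_ge t g with h0 | h0
        · rw [show 4*t+1 = 4*t+1+0 by ring, R1_getD_block g t 0 h0 (by omega)]; rfl
        · have : t = g := by omega
          subst this
          rw [show 4*t+1 = 4*t+1+0 by ring, R1_getD_last t 0 (by omega)]; rfl]
  rw [show (R2 g).getD (4*t+1) a = c by rw [R2_getD g t 1 h (by omega)]; rfl]
  rw [show (R3 g).getD (4*t+1) a = d by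
        rw [show 4*t+1 = 2*(2*t)+1 by ring, R3_getD g (2*t) 1 (by omega) (by omega)]; rfl]

lemma col_4t2 (g t : ℕ) (h : t ≤ g) : col (pic g) 4 (4*t+2) = [a, b, d, c] := by
  rw [col_pic]
  rw [show (R0 g).getD (4*t+2) a = a by
        rcases Nat.lt_or_ge t g with h0 | h0
        · rw [show 4*t+2 = 4*t+2+0 by ring, R0_getD_block g t 0 h0 (by omega)]; rfl
        · have : t = g := by omega
          subst this
          rw [show 4*t+2 = 4*t+2+0 by ring, R0_getD_last t 0 (by omega)]; rfl]
  rw [show (R1 g).getD (4*t+2) a = b by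
        rcases Nat.lt_or_ge t g with h0 | h0
        · rw [show 4*t+2 = 4*t+1+1 by ring, R1_getD_block g t 1 h0 (by omega)]; rfl
        · have : t = g := by omega
          subst this
          rw [show 4*t+2 = 4*t+1+1 by ring, R1_getD_last t 1 (by omega)]; rfl]
  rw [show (R2 g).getD (4*t+2) a = d by rw [R2_getD g t 2 h (by omega)]; rfl]
  rw [show (R3 g).getD (4*t+2) a = c by
        rw [show 4*t+2 = 2*(2*t+1)+0 by ring, R3_getD g (2*t+1) 0 (by omega) (by omega)]; rfl]

lemma col_4t3 (g t : ℕ) (h : t < g) : col (pic g) 4 (4*t+3) = [a, c, b, d] := by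
  rw [col_pic]
  rw [show (R0 g).getD (4*t+3) a = a by
        rw [show 4*t+3 = 4*t+2+1 by ring, R0_getD_block g t 1 h (by omega)]; rfl]
  rw [show (R1 g).getD (4*t+3) a = c by
        rw [show 4*t+3 = 4*t+1+2 by ring, R1_getD_block g t 2 h (by omega)]; rfl]
  rw [show (R2 g).getD (4*t+3) a = b by rw [R2_getD g t 3 (by omega) (by omega)]; rfl]
  rw [show (R3 g).getD (4*t+3) a = d by
        rw [show 4*t+3 = 2*(2*t+1)+1 by ring, R3_getD g (2*t+1) 1 (by omega) (by omega)]; rfl]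

lemma col_last (g : ℕ) : col (pic g) 4 (4*g+3) = [b, d, b, d] := by
  rw [col_pic]
  rw [show (R0 g).getD (4*g+3) a = b by
        rw [show 4*g+3 = 4*g+2+1 by ring, R0_getD_last g 1 (by omega)]; rfl]
  rw [show (R1 g).getD (4*g+3) a = d by
        rw [show 4*g+3 = 4*g+1+2 by ring, R1_getD_last g 2 (by omega)]; rfl]
  rw [show (R2 g).getD (4*g+3) a = b by rw [R2_getD g g 3 (by omega) (by omega)]; rfl]
  rw [show (R3 g).getD (4*g+3) a = d by
        rw [show 4*g+3 = 2*(2*g+1)+1 by ring, R3_getD g (2*g+1) 1 (by omega) (by omega)]; rfl]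

-- Dyck rows
lemma DRow_aabb : DRow [a, a, b, b] := by simpa using DRow.ab.wrap_ab
lemma DRow_abcd : DRow [a, b, c, d] := DRow.ab.append DRow.cd
lemma DRow_acdb : DRow [a, c, d, b] := by simpa using DRow.cd.wrap_ab

lemma DRow_R0 (g : ℕ) : DRow (R0 g) :=
  DRow.ab.append ((DRow_aabb.rep g).append DRow.ab)

lemma DRow_R1 (g : ℕ) : DRow (R1 g) := by
  have h : R1 g = c :: ((rep [a,b,c,d] g ++ [a,b]) ++ [d]) := by simp [R1]
  rw [h]
  have := ((DRow_abcd.rep g).append DRow.ab).wrap_cd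
  simpa using this

lemma DRow_R2 (g : ℕ) : DRow (R2 g) := DRow_acdb.rep (g+1)
lemma DRow_R3 (g : ℕ) : DRow (R3 g) := DRow.cd.rep (2*g+2)

lemma DC_pic (g : ℕ) : DC 4 (4*g+4) (pic g) := by
  refine ⟨by omega, by omega, ?_, ?_⟩
  · intro i hi
    interval_cases i
    · rw [row_pic0]; exact DRow_R0 g
    · rw [row_pic1]; exact DRow_R1 g
    · rw [row_pic2]; exact DRow_R2 g
    · rw [row_pic3]; exact DRow_R3 g
  · intro j hj
    obtain ⟨t, r, hr, rfl, ht⟩ : ∃ t r, r < 4 ∧ j = 4*t + r ∧ t ≤ g :=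
      ⟨j / 4, j % 4, by omega, by omega, by omega⟩
    interval_cases r
    · rcases Nat.eq_zero_or_pos t with h0 | h0
      · subst h0
        rw [show 4*0+0 = 0 by ring, col_0]
        exact DCol.acac
      · rw [show 4*t+0 = 4*t by ring, col_4t g t h0 ht]
        exact DCol.bdac
    · rw [col_4t1 g t ht]; exact DCol.bacd
    · rw [col_4t2 g t ht]; exact DCol.abdc
    · rcases Nat.lt_or_ge t g with h0 | h0
      · rw [col_4t3 g t h0]; exact DCol.acbd
      · have : t = g := by omega
        subst this
        rw [col_last]; exact DCol.bdbd

-- helper for row matches with index rewriting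
lemma rowMatchW_split' (w : List Del) (x y : Del) (u mid v : List Del) (j j' : ℕ)
    (hw : w = u ++ x :: (mid ++ y :: v)) (hj : j = u.length)
    (hj' : j' = u.length + (mid.length + 1))
    (hxy : (x = a ∧ y = b) ∨ (x = c ∧ y = d)) (hmid : DRow mid) :
    rowMatchW w j j' := by
  subst hw hj hj'
  exact rowMatchW_split x y u mid v hxy hmid

-- edges; notation
def ADJ (g : ℕ) (u v : ℕ × ℕ) : Prop := adj (pic g) 4 (4*g+4) u v

lemma rowE (g : ℕ) (i j j' : ℕ) (hi : i < 4)
    (h : rowMatchW (([R0 g, R1 g, R2 g, R3 g]).getD i []) j j' ∨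
         rowMatchW (([R0 g, R1 g, R2 g, R3 g]).getD i []) j' j) :
    ADJ g (i, j) (i, j') := by
  left
  exact ⟨rfl, by rw [row_pic g i hi]; exact h⟩

lemma colE (g : ℕ) (j i i' : ℕ)
    (h : colMatchW (col (pic g) 4 j) i i' ∨ colMatchW (col (pic g) 4 j) i' i) :
    ADJ g (i, j) (i', j) := by
  right
  exact ⟨rfl, h⟩

-- row edges
lemma edge_R1 (g : ℕ) : ADJ g (0, 0) (0, 1) := by
  refine rowE g 0 0 1 (by omega) (Or.inl ?_)
  exact rowMatchW_split' _ a b [] [] (rep [a,a,b,b] g ++ [a,b]) 0 1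
    (by simp [R0]) (by simp) (by simp) (Or.inl ⟨rfl, rfl⟩) DRow.nil

lemma edge_R5 (g s : ℕ) (hs : s < g) : ADJ g (0, 4*s+2) (0, 4*s+5) := by
  obtain ⟨s', hs'⟩ : ∃ s', g = s + (s' + 1) := ⟨g - s - 1, by omega⟩
  refine rowE g 0 (4*s+2) (4*s+5) (by omega) (Or.inl ?_)
  refine rowMatchW_split' _ a b ([a,b] ++ rep [a,a,b,b] s) [a,b]
    (rep [a,a,b,b] s' ++ [a,b]) (4*s+2) (4*s+5) ?_ ?_ ?_ (Or.inl ⟨rfl, rfl⟩) DRow.ab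
  · show R0 g = _
    rw [R0, hs', rep_add]
    simp [rep]
  · simp [rep_length]; omega
  · simp [rep_length]; omega

lemma edge_R6 (g : ℕ) : ADJ g (0, 4*g+2) (0, 4*g+3) := by
  refine rowE g 0 (4*g+2) (4*g+3) (by omega) (Or.inl ?_)
  refine rowMatchW_split' _ a b ([a,b] ++ rep [a,a,b,b] g) [] [] (4*g+2) (4*g+3) ?_ ?_ ?_
    (Or.inl ⟨rfl, rfl⟩) DRow.nil
  · show R0 g = _
    simp [R0]
  · simp [rep_length]; omega
  · simp [rep_length]; omega

lemma edge_R7 (g : ℕ) : ADJ g (1, 4*g+3) (1, 0) := by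
  refine rowE g 1 (4*g+3) 0 (by omega) (Or.inr ?_)
  refine rowMatchW_split' _ c d [] (rep [a,b,c,d] g ++ [a,b]) [] 0 (4*g+3) ?_ ?_ ?_
    (Or.inr ⟨rfl, rfl⟩) ((DRow_abcd.rep g).append DRow.ab)
  · show R1 g = _
    simp [R1]
  · simp
  · simp [rep_length]; omega

lemma edge_R2 (g t : ℕ) (ht : t ≤ g) : ADJ g (3, 4*t+1) (3, 4*t) := by
  obtain ⟨s, hs⟩ : ∃ s, 2*g+2 = 2*t + (s + 1) := ⟨2*g+1-2*t, by omega⟩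
  refine rowE g 3 (4*t+1) (4*t) (by omega) (Or.inr ?_)
  refine rowMatchW_split' _ c d (rep [c,d] (2*t)) [] (rep [c,d] s) (4*t) (4*t+1) ?_ ?_ ?_
    (Or.inr ⟨rfl, rfl⟩) DRow.nil
  · show R3 g = _
    rw [R3, hs, rep_add]
    simp [rep]
  · simp [rep_length]; omega
  · simp [rep_length]; omega

lemma edge_R4 (g t : ℕ) (ht : t ≤ g) : ADJ g (3, 4*t+3) (3, 4*t+2) := by
  obtain ⟨s, hs⟩ : ∃ s, 2*g+2 = (2*t+1) + (s + 1) := ⟨2*g-2*t, by omega⟩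
  refine rowE g 3 (4*t+3) (4*t+2) (by omega) (Or.inr ?_)
  refine rowMatchW_split' _ c d (rep [c,d] (2*t+1)) [] (rep [c,d] s) (4*t+2) (4*t+3) ?_ ?_ ?_
    (Or.inr ⟨rfl, rfl⟩) DRow.nil
  · show R3 g = _
    rw [R3, hs, rep_add]
    simp [rep]
  · simp [rep_length]; omega
  · simp [rep_length]; omega

lemma edge_R3 (g t : ℕ) (ht : t ≤ g) : ADJ g (2, 4*t) (2, 4*t+3) := by
  obtain ⟨s, hs⟩ : ∃ s, g+1 = t + (s + 1) := ⟨g-t, by omega⟩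
  refine rowE g 2 (4*t) (4*t+3) (by omega) (Or.inl ?_)
  refine rowMatchW_split' _ a b (rep [a,c,d,b] t) [c,d] (rep [a,c,d,b] s) (4*t) (4*t+3) ?_ ?_ ?_
    (Or.inl ⟨rfl, rfl⟩) DRow.cd
  · show R2 g = _
    rw [R2, hs, rep_add]
    simp [rep]
  · simp [rep_length]; omega
  · simp [rep_length]; omega

-- column edges
lemma edge_C1 (g t : ℕ) (ht : t ≤ g) : ADJ g (0, 4*t+1) (3, 4*t+1) := by
  refine colE g (4*t+1) 0 3 (Or.inl ?_)
  rw [col_4t1 g t ht]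
  exact colMatchW_03 b a c d (Or.inr ⟨rfl, rfl⟩) DCol.ac

lemma edge_C2 (g t : ℕ) (ht : t ≤ g) : ADJ g (3, 4*t) (2, 4*t) := by
  refine colE g (4*t) 3 2 (Or.inr ?_)
  rcases Nat.eq_zero_or_pos t with h0 | h0
  · subst h0
    rw [show 4*0 = 0 by ring, col_0]
    exact colMatchW_23 a c a c (Or.inl ⟨rfl, rfl⟩)
  · rw [col_4t g t h0 ht]
    exact colMatchW_23 b d a c (Or.inl ⟨rfl, rfl⟩)

lemma edge_C3 (g t : ℕ) (ht : t ≤ g) : ADJ g (2, 4*t+3) (3, 4*t+3) := by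
  refine colE g (4*t+3) 2 3 (Or.inl ?_)
  rcases Nat.lt_or_ge t g with h0 | h0
  · rw [col_4t3 g t h0]
    exact colMatchW_23 a c b d (Or.inr ⟨rfl, rfl⟩)
  · have : t = g := by omega
    subst this
    rw [col_last]
    exact colMatchW_23 b d b d (Or.inr ⟨rfl, rfl⟩)

lemma edge_C4 (g t : ℕ) (ht : t ≤ g) : ADJ g (3, 4*t+2) (0, 4*t+2) := by
  refine colE g (4*t+2) 3 0 (Or.inr ?_)
  rw [col_4t2 g t ht]
  exact colMatchW_03 a b d c (Or.inl ⟨rfl, rfl⟩) DCol.bd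

lemma edge_C5 (g : ℕ) : ADJ g (0, 4*g+3) (1, 4*g+3) := by
  refine colE g (4*g+3) 0 1 (Or.inl ?_)
  rw [col_last]
  exact colMatchW_01 b d b d (Or.inr ⟨rfl, rfl⟩)

lemma edge_C6 (g : ℕ) : ADJ g (1, 0) (0, 0) := by
  refine colE g 0 1 0 (Or.inr ?_)
  rw [col_0]
  exact colMatchW_01 a c a c (Or.inl ⟨rfl, rfl⟩)

-- the circuit
def blockL (s : ℕ) : List (ℕ × ℕ) :=
  [(0,4*s+2),(0,4*s+5),(3,4*s+5),(3,4*s+4),(2,4*s+4),(2,4*s+7),(3,4*s+7),(3,4*s+6)]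

def TL : ℕ → ℕ → List (ℕ × ℕ)
  | s, 0 => [(0,4*s+2),(0,4*s+3),(1,4*s+3),(1,0)]
  | s, k+1 => blockL s ++ TL (s+1) k

def preL : List (ℕ × ℕ) := [(0,0),(0,1),(3,1),(3,0),(2,0),(2,3),(3,3),(3,2)]

def LL (g : ℕ) : List (ℕ × ℕ) := preL ++ TL 0 g

lemma TL_length (k s : ℕ) : (TL s k).length = 8*k + 4 := by
  induction k generalizing s with
  | zero => rfl
  | succ n ih => simp [TL, blockL, ih]; omega

lemma LL_length (g : ℕ) : (LL g).length = 8*g + 12 := by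
  simp [LL, preL, TL_length]; try omega

lemma TL_ne_nil (s k : ℕ) : TL s k ≠ [] := by
  cases k <;> simp [TL, blockL]

lemma TL_head (s k : ℕ) : (TL s k).head? = some (0, 4*s+2) := by
  cases k <;> rfl

lemma TL_last (s k : ℕ) : (TL s k).getLast? = some (1, 0) := by
  induction k generalizing s with
  | zero => rfl
  | succ n ih =>
    show (blockL s ++ TL (s+1) n).getLast? = _
    rw [List.getLast?_append_of_ne_nil _ (TL_ne_nil (s+1) n)]
    exact ih (s+1)

lemma TL_nodup_inv (k s : ℕ) : (TL s k).Nodup ∧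
    ∀ x ∈ TL s k, (x.1 = 0 → 4*s+2 ≤ x.2) ∧ ((x.1 = 2 ∨ x.1 = 3) → 4*s+4 ≤ x.2) := by
  induction k generalizing s with
  | zero =>
    constructor
    · simp [TL]
      try omega
    · intro x hx
      simp [TL] at hx
      rcases hx with rfl | rfl | rfl | rfl <;> simp <;> try omega
  | succ n ih =>
    obtain ⟨ih1, ih2⟩ := ih (s+1)
    constructor
    · show (blockL s ++ TL (s+1) n).Nodup
      rw [List.nodup_append]
      refine ⟨by simp [blockL]; try omega, ih1, ?_⟩
      intro x hx x' hx' hxx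
      subst hxx
      obtain ⟨h1, h2⟩ := ih2 x hx'
      simp [blockL] at hx
      rcases hx with rfl | rfl | rfl | rfl | rfl | rfl | rfl | rfl <;> simp at h1 h2 <;> omega
    · intro x hx
      rw [show TL s (n+1) = blockL s ++ TL (s+1) n from rfl, List.mem_append] at hx
      rcases hx with hx | hx
      · simp [blockL] at hx
        rcases hx with rfl | rfl | rfl | rfl | rfl | rfl | rfl | rfl <;> simp <;> try omega
      · obtain ⟨h1, h2⟩ := ih2 x hx
        constructor
        · intro h; have := h1 h; omega
        · intro h; have := h2 h; omega

lemma LL_nodup (g : ℕ) : (LL g).Nodup := by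
  rw [LL, List.nodup_append]
  obtain ⟨h1, h2⟩ := TL_nodup_inv g 0
  refine ⟨by decide, h1, ?_⟩
  intro x hx x' hx' hxx
  subst hxx
  obtain ⟨ha, hb⟩ := h2 x hx'
  simp [preL] at hx
  rcases hx with rfl | rfl | rfl | rfl | rfl | rfl | rfl | rfl <;> simp at ha hb <;> omega

-- chains
lemma TL_chain (g k s : ℕ) (h : s + k = g) : List.Chain' (ADJ g) (TL s k) := by
  induction k generalizing s with
  | zero =>
    have hs : s = g := by omega
    subst hs
    show List.Chain' (ADJ s) [(0,4*s+2),(0,4*s+3),(1,4*s+3),(1,0)]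
    refine List.isChain_cons_cons.mpr ⟨edge_R6 s, ?_⟩
    refine List.isChain_cons_cons.mpr ⟨edge_C5 s, ?_⟩
    refine List.isChain_cons_cons.mpr ⟨edge_R7 s, ?_⟩
    simp
  | succ n ih =>
    show List.Chain' (ADJ g) (blockL s ++ TL (s+1) n)
    unfold List.Chain'
    rw [List.isChain_append]
    have ht : s + 1 ≤ g := by omega
    refine ⟨?_, ih (s+1) (by omega), ?_⟩
    · show List.Chain' (ADJ g)
        [(0,4*s+2),(0,4*s+5),(3,4*s+5),(3,4*s+4),(2,4*s+4),(2,4*s+7),(3,4*s+7),(3,4*s+6)]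
      refine List.isChain_cons_cons.mpr ⟨by
        have := edge_R5 g s (by omega); exact this, ?_⟩
      refine List.isChain_cons_cons.mpr ⟨by
        have := edge_C1 g (s+1) ht
        rw [show 4*(s+1)+1 = 4*s+5 by ring] at this; exact this, ?_⟩
      refine List.isChain_cons_cons.mpr ⟨by
        have := edge_R2 g (s+1) ht
        rw [show 4*(s+1)+1 = 4*s+5 by ring, show 4*(s+1) = 4*s+4 by ring] at this
        exact this, ?_⟩
      refine List.isChain_cons_cons.mpr ⟨by
        have := edge_C2 g (s+1) ht
        rw [show 4*(s+1) = 4*s+4 by ring] at this; exact this, ?_⟩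
      refine List.isChain_cons_cons.mpr ⟨by
        have := edge_R3 g (s+1) ht
        rw [show 4*(s+1) = 4*s+4 by ring, show 4*s+4+3 = 4*s+7 by ring] at this
        exact this, ?_⟩
      refine List.isChain_cons_cons.mpr ⟨by
        have := edge_C3 g (s+1) ht
        rw [show 4*(s+1)+3 = 4*s+7 by ring] at this; exact this, ?_⟩
      refine List.isChain_cons_cons.mpr ⟨by
        have := edge_R4 g (s+1) ht
        rw [show 4*(s+1)+3 = 4*s+7 by ring, show 4*(s+1)+2 = 4*s+6 by ring] at this
        exact this, ?_⟩
      simp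
    · intro x hx y hy
      simp [blockL] at hx
      rw [TL_head] at hy
      simp at hy
      subst hx
      subst hy
      have e := edge_C4 g (s+1) ht
      rw [show 4*(s+1)+2 = 4*s+6 by ring] at e
      rw [show 4*(s+1)+2 = 4*s+6 by ring]
      exact e

lemma LL_chain (g : ℕ) : List.Chain' (ADJ g) (LL g) := by
  unfold List.Chain'
  rw [LL, List.isChain_append]
  refine ⟨?_, TL_chain g g 0 (by omega), ?_⟩
  · show List.Chain' (ADJ g) [(0,0),(0,1),(3,1),(3,0),(2,0),(2,3),(3,3),(3,2)]
    refine List.isChain_cons_cons.mpr ⟨edge_R1 g, ?_⟩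
    refine List.isChain_cons_cons.mpr ⟨by
      have := edge_C1 g 0 (by omega)
      simpa using this, ?_⟩
    refine List.isChain_cons_cons.mpr ⟨by
      have := edge_R2 g 0 (by omega)
      simpa using this, ?_⟩
    refine List.isChain_cons_cons.mpr ⟨by
      have := edge_C2 g 0 (by omega)
      simpa using this, ?_⟩
    refine List.isChain_cons_cons.mpr ⟨by
      have := edge_R3 g 0 (by omega)
      simpa using this, ?_⟩
    refine List.isChain_cons_cons.mpr ⟨by
      have := edge_C3 g 0 (by omega)
      simpa using this, ?_⟩
    refine List.isChain_cons_cons.mpr ⟨by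
      have := edge_R4 g 0 (by omega)
      simpa using this, ?_⟩
    simp
  · intro x hx y hy
    simp [preL] at hx
    rw [TL_head] at hy
    simp at hy
    subst hx
    subst hy
    have e := edge_C4 g 0 (by omega)
    simpa using e

-- generic wrap-around lemma
lemma circuit_of_chain {α : Type*} (R : α → α → Prop) (L : List α) (d : α) (hne : L ≠ [])
    (hc : List.Chain' R L) (hw : R (L.getLast hne) (L.head hne)) :
    ∀ k < L.length, R (L.getD k d) (L.getD ((k + 1) % L.length) d) := by
  intro k hk
  by_cases hlt : k + 1 < L.length
  · rw [Nat.mod_eq_of_lt hlt]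
    rw [List.getD_eq_getElem L d hk, List.getD_eq_getElem L d hlt]
    have := List.isChain_iff_getElem.mp hc k (by omega)
    simpa [List.get_eq_getElem] using this
  · have hk1 : k + 1 = L.length := by omega
    rw [hk1, Nat.mod_self]
    have hpos : 0 < L.length := by omega
    have h1 : L.getD k d = L.getLast hne := by
      rw [List.getD_eq_getElem L d hk, List.getLast_eq_getElem]
      congr 1
      omega
    have h2 : L.getD 0 d = L.head hne := by
      rw [List.getD_eq_getElem L d hpos, List.head_eq_getElem]
    rw [h1, h2]
    exact hw

lemma colMatchW_pair (x0 x1 : Del)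
    (hxy : (x0 = a ∧ x1 = c) ∨ (x0 = b ∧ x1 = d)) : colMatchW [x0, x1] 0 1 := by
  refine ⟨by omega, by simp, ?_, by simpa using DCol.nil⟩
  rcases hxy with ⟨hx, hy⟩ | ⟨hx, hy⟩
  · exact Or.inl ⟨by simp [hx], by simp [hy]⟩
  · exact Or.inr ⟨by simp [hx], by simp [hy]⟩

-- base case picture (h = 0)
def pic0 : ℕ → ℕ → Del := fun i j =>
  if i = 0 then (if j = 0 then a else b) else (if j = 0 then c else d)

lemma row_pic0_0 : row pic0 2 0 = [a, b] := rfl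
lemma row_pic0_1 : row pic0 2 1 = [c, d] := rfl
lemma col_pic0_0 : col pic0 2 0 = [a, c] := rfl
lemma col_pic0_1 : col pic0 2 1 = [b, d] := rfl

lemma base_case : ∃ (m n : ℕ) (p : ℕ → ℕ → Del) (L : List (ℕ × ℕ)),
    DC m n p ∧ L.Nodup ∧ L.length = 4 + 8 * 0 ∧
    ∀ k < L.length, adj p m n (L.getD k (0, 0)) (L.getD ((k + 1) % L.length) (0, 0)) := by
  refine ⟨2, 2, pic0, [(0,0),(0,1),(1,1),(1,0)], ?_, by decide, by decide, ?_⟩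
  · refine ⟨by omega, by omega, ?_, ?_⟩
    · intro i hi
      interval_cases i
      · rw [row_pic0_0]; exact DRow.ab
      · rw [row_pic0_1]; exact DRow.cd
    · intro j hj
      interval_cases j
      · rw [col_pic0_0]; exact DCol.ac
      · rw [col_pic0_1]; exact DCol.bd
  · have e0 : adj pic0 2 2 (0,0) (0,1) := by
      left
      refine ⟨rfl, Or.inl ?_⟩
      rw [row_pic0_0]
      exact rowMatchW_split' _ a b [] [] [] 0 1 rfl rfl rfl (Or.inl ⟨rfl, rfl⟩) DRow.nil
    have e1 : adj pic0 2 2 (0,1) (1,1) := by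
      right
      refine ⟨rfl, Or.inl ?_⟩
      rw [col_pic0_1]
      exact colMatchW_pair b d (Or.inr ⟨rfl, rfl⟩)
    have e2 : adj pic0 2 2 (1,1) (1,0) := by
      left
      refine ⟨rfl, Or.inr ?_⟩
      rw [row_pic0_1]
      exact rowMatchW_split' _ c d [] [] [] 0 1 rfl rfl rfl (Or.inr ⟨rfl, rfl⟩) DRow.nil
    have e3 : adj pic0 2 2 (1,0) (0,0) := by
      right
      refine ⟨rfl, Or.inr ?_⟩
      rw [col_pic0_0]
      exact colMatchW_pair a c (Or.inl ⟨rfl, rfl⟩)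
    apply circuit_of_chain (adj pic0 2 2) [(0,0),(0,1),(1,1),(1,0)] (0,0) (by simp)
    · exact List.isChain_cons_cons.mpr ⟨e0, List.isChain_cons_cons.mpr ⟨e1, List.isChain_cons_cons.mpr ⟨e2, by simp⟩⟩⟩
    · simpa using e3


/-- For every h ≥ 0 there is a DC₁ picture whose matching graph contains a
simple circuit of length 4 + 8h. -/
theorem exists_circuit_of_length (h : ℕ) :
    ∃ (m n : ℕ) (p : ℕ → ℕ → Del) (L : List (ℕ × ℕ)),
      DC m n p ∧ L.Nodup ∧ L.length = 4 + 8 * h ∧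
      ∀ k < L.length,
        adj p m n (L.getD k (0, 0)) (L.getD ((k + 1) % L.length) (0, 0)) := by
  cases h with
  | zero => exact base_case
  | succ g =>
    refine ⟨4, 4*g+4, pic g, LL g, DC_pic g, LL_nodup g, by rw [LL_length]; omega, ?_⟩
    have hne : LL g ≠ [] := by simp [LL, preL]
    apply circuit_of_chain (ADJ g) (LL g) (0,0) hne (LL_chain g)
    have hlast : (LL g).getLast hne = (1, 0) := by
      have h1 : (LL g).getLast? = some (1, 0) := by
        rw [LL, List.getLast?_append_of_ne_nil _ (TL_ne_nil 0 g)]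
        exact TL_last 0 g
      rw [List.getLast?_eq_getLast hne] at h1
      exact Option.some_injective _ h1
    have hhead : (LL g).head hne = (0, 0) := by
      have h1 : (LL g).head? = some (0, 0) := rfl
      rw [List.head?_eq_head hne] at h1
      exact Option.some_injective _ h1
    rw [hlast, hhead]
    exact edge_C6 g
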